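/- Let A be a k×r complex matrix and B an r×l complex matrix, with r ≤ min(k,l), and suppose rank(A) = rank(B) = r (both have full rank r). Then ‖(AB)⁺‖₂ ≤ ‖A⁺‖₂ · ‖B⁺‖₂, where X⁺ denotes the Moore–Penrose pseudoinverse of X. -/
import Mathlib


open Matrix

/-- Spectral norm of a complex matrix. -/
noncomputable def spec {m n : ℕ} (A : Matrix (Fin m) (Fin n) ℂ) : ℝ :=
  ‖LinearMap.toContinuousLinearMap (Matrix.toEuclideanLin A)‖

/-- `X` is the Moore–Penrose pseudoinverse of `A` (the four Moore–Penrose conditions). -/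
def IsMPInv {k r : ℕ} (A : Matrix (Fin k) (Fin r) ℂ) (X : Matrix (Fin r) (Fin k) ℂ) : Prop :=
  A * X * A = A ∧ X * A * X = X ∧ (A * X)ᴴ = A * X ∧ (X * A)ᴴ = X * A

/-- A full-rank square complex matrix is a unit. -/
lemma isUnit_of_rank_eq {r : ℕ} (P : Matrix (Fin r) (Fin r) ℂ) (h : P.rank = r) : IsUnit P := by
  have hsurj : Function.Surjective P.mulVecLin := by
    rw [← LinearMap.range_eq_top]
    apply Submodule.eq_top_of_finrank_eq
    simpa [Matrix.rank, Module.finrank_fintype_fun_eq_card] using h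
  have hbij : Function.Bijective P.mulVecLin :=
    ⟨(LinearMap.injective_iff_surjective).mpr hsurj, hsurj⟩
  have heq : (Matrix.toLinAlgEquiv' P : (Fin r → ℂ) →ₗ[ℂ] (Fin r → ℂ)) = P.mulVecLin := by
    ext v i
    simp [Matrix.toLinAlgEquiv'_apply]
  have hu : IsUnit (Matrix.toLinAlgEquiv' P) := by
    rw [Module.End.isUnit_iff, heq]
    exact hbij
  simpa using hu.map Matrix.toLinAlgEquiv'.symm

/-- An idempotent full-rank square complex matrix is the identity. -/
lemma idem_full_rank_eq_one {r : ℕ} (P : Matrix (Fin r) (Fin r) ℂ)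
    (hidem : P * P = P) (h : P.rank = r) : P = 1 := by
  obtain ⟨u, hu⟩ := isUnit_of_rank_eq P h
  have h1 : P * (↑u⁻¹ : Matrix (Fin r) (Fin r) ℂ) = 1 := by rw [← hu, Units.mul_inv]
  calc P = P * (P * (↑u⁻¹ : Matrix (Fin r) (Fin r) ℂ)) := by rw [h1, Matrix.mul_one]
  _ = (P * P) * (↑u⁻¹ : Matrix (Fin r) (Fin r) ℂ) := by rw [Matrix.mul_assoc]
  _ = P * (↑u⁻¹ : Matrix (Fin r) (Fin r) ℂ) := by rw [hidem]
  _ = 1 := h1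

/-- Uniqueness of the Moore–Penrose pseudoinverse. -/
lemma mpinv_unique {k r : ℕ} (M : Matrix (Fin k) (Fin r) ℂ)
    (X Y : Matrix (Fin r) (Fin k) ℂ) (hX : IsMPInv M X) (hY : IsMPInv M Y) : X = Y := by
  obtain ⟨hX1, hX2, hX3, hX4⟩ := hX
  obtain ⟨hY1, hY2, hY3, hY4⟩ := hY
  have key1 : X = X * M * Y := by
    calc X = X * M * X := hX2.symm
    _ = X * (M * X)ᴴ := by rw [hX3, Matrix.mul_assoc]
    _ = X * (M * Y * M * X)ᴴ := by rw [hY1]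
    _ = X * ((M * Y) * (M * X))ᴴ := by simp only [Matrix.mul_assoc]
    _ = X * ((M * X)ᴴ * (M * Y)ᴴ) := by rw [conjTranspose_mul]
    _ = X * ((M * X) * (M * Y)) := by rw [hX3, hY3]
    _ = (X * M * X) * (M * Y) := by simp only [Matrix.mul_assoc]
    _ = X * (M * Y) := by rw [hX2]
    _ = X * M * Y := by rw [Matrix.mul_assoc]
  have key2 : Y = X * M * Y := by
    calc Y = Y * M * Y := hY2.symm
    _ = (Y * M)ᴴ * Y := by rw [hY4]
    _ = (Y * (M * X * M))ᴴ * Y := by rw [hX1]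
    _ = ((Y * M) * (X * M))ᴴ * Y := by simp only [Matrix.mul_assoc]
    _ = ((X * M)ᴴ * (Y * M)ᴴ) * Y := by rw [conjTranspose_mul]
    _ = ((X * M) * (Y * M)) * Y := by rw [hX4, hY4]
    _ = X * M * (Y * M * Y) := by simp only [Matrix.mul_assoc]
    _ = X * M * Y := by rw [hY2]
  rw [key1, ← key2]

/-- Submultiplicativity of the spectral norm. -/
lemma spec_mul_le {m n p : ℕ} (X : Matrix (Fin m) (Fin n) ℂ) (Y : Matrix (Fin n) (Fin p) ℂ) :
    spec (X * Y) ≤ spec X * spec Y := by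
  have heq : LinearMap.toContinuousLinearMap (Matrix.toEuclideanLin (X * Y)) =
      (LinearMap.toContinuousLinearMap (Matrix.toEuclideanLin X)).comp
        (LinearMap.toContinuousLinearMap (Matrix.toEuclideanLin Y)) := by
    ext v
    simp [Matrix.toEuclideanLin_apply, Matrix.mulVec_mulVec]
  unfold spec
  rw [heq]
  exact ContinuousLinearMap.opNorm_comp_le _ _

/-- Norm of the pseudoinverse of a matrix product, spectral-norm version: if
`A` is `k×r` and `B` is `r×l`, with `r ≤ min(k,l)`, and both have full rank `r`,
then `‖(AB)⁺‖₂ ≤ ‖A⁺‖₂ · ‖B⁺‖₂`. -/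
theorem pinv_product_norm_spectral {k r l : ℕ} (hrk : r ≤ k) (hrl : r ≤ l)
    (A : Matrix (Fin k) (Fin r) ℂ) (B : Matrix (Fin r) (Fin l) ℂ)
    (hA : A.rank = r) (hB : B.rank = r)
    (Ap : Matrix (Fin r) (Fin k) ℂ) (hAp : IsMPInv A Ap)
    (Bp : Matrix (Fin l) (Fin r) ℂ) (hBp : IsMPInv B Bp)
    (Gp : Matrix (Fin l) (Fin k) ℂ) (hGp : IsMPInv (A * B) Gp) :
    spec Gp ≤ spec Ap * spec Bp := by
  obtain ⟨hA1, hA2, hA3, hA4⟩ := hAp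
  obtain ⟨hB1, hB2, hB3, hB4⟩ := hBp
  -- Ap * A = 1
  have hPA : Ap * A = 1 := by
    apply idem_full_rank_eq_one
    · calc (Ap * A) * (Ap * A) = (Ap * A * Ap) * A := by simp only [Matrix.mul_assoc]
      _ = Ap * A := by rw [hA2]
    · apply le_antisymm (Matrix.rank_le_width _)
      have hAA : A = A * (Ap * A) := by rw [← Matrix.mul_assoc, hA1]
      calc r = A.rank := hA.symm
      _ = (A * (Ap * A)).rank := by rw [← hAA]
      _ ≤ (Ap * A).rank := Matrix.rank_mul_le_right _ _
  -- B * Bp = 1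
  have hBQ : B * Bp = 1 := by
    apply idem_full_rank_eq_one
    · calc (B * Bp) * (B * Bp) = (B * Bp * B) * Bp := by simp only [Matrix.mul_assoc]
      _ = B * Bp := by rw [hB1]
    · apply le_antisymm (Matrix.rank_le_width _)
      calc r = B.rank := hB.symm
      _ = ((B * Bp) * B).rank := by rw [hB1]
      _ ≤ (B * Bp).rank := Matrix.rank_mul_le_left _ _
  -- Bp * Ap is an MP inverse of A * B
  have hMP : IsMPInv (A * B) (Bp * Ap) := by
    refine ⟨?_, ?_, ?_, ?_⟩
    · calc A * B * (Bp * Ap) * (A * B) = A * ((B * Bp) * ((Ap * A) * B)) := by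
            simp only [Matrix.mul_assoc]
      _ = A * B := by rw [hPA, hBQ, Matrix.one_mul, Matrix.one_mul]
    · calc Bp * Ap * (A * B) * (Bp * Ap) = Bp * ((Ap * A) * ((B * Bp) * Ap)) := by
            simp only [Matrix.mul_assoc]
      _ = Bp * Ap := by rw [hPA, hBQ, Matrix.one_mul, Matrix.one_mul]
    · have h : A * B * (Bp * Ap) = A * Ap := by
        calc A * B * (Bp * Ap) = A * ((B * Bp) * Ap) := by simp only [Matrix.mul_assoc]
        _ = A * Ap := by rw [hBQ, Matrix.one_mul]
      rw [h]; exact hA3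
    · have h : Bp * Ap * (A * B) = Bp * B := by
        calc Bp * Ap * (A * B) = Bp * ((Ap * A) * B) := by simp only [Matrix.mul_assoc]
        _ = Bp * B := by rw [hPA, Matrix.one_mul]
      rw [h]; exact hB4
  have hG : Gp = Bp * Ap := mpinv_unique (A * B) Gp (Bp * Ap) hGp hMP
  calc spec Gp = spec (Bp * Ap) := by rw [hG]
  _ ≤ spec Bp * spec Ap := spec_mul_le _ _
  _ = spec Ap * spec Bp := mul_comm _ _
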